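/- Fay's trisecant identity (the associative Yang–Baxter equation for the Kronecker function): for every τ with Im τ > 0 and all complex numbers z, z', μ, μ' such that none of z, z', z+z', μ, μ', μ−μ', μ'−μ lies in the lattice ℤ + τℤ, one has φ(z,μ)·φ(z',μ') = φ(z+z',μ')·φ(z,μ−μ') + φ(z',μ'−μ)·φ(z+z',μ). -/

import Mathlib

noncomputable section

open Complex

/-- The odd Jacobi theta function
`θ(z|τ) = −i Σ_{n ∈ ℤ} (−1)^n exp(πiτ(n+1/2)² + (2n+1)πi z)`. -/
def jtheta (τ z : ℂ) : ℂ :=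
  -Complex.I * ∑' n : ℤ, (-1 : ℂ) ^ n *
    Complex.exp ((Real.pi : ℂ) * Complex.I * τ * ((n : ℂ) + 1 / 2) ^ 2 +
      (2 * (n : ℂ) + 1) * (Real.pi : ℂ) * Complex.I * z)

/-- The lattice `ℤ + τℤ`. -/
def lattice (τ : ℂ) : Set ℂ := {z | ∃ a b : ℤ, z = (a : ℂ) + τ * (b : ℂ)}

/-- The Kronecker function `φ(z,μ) = θ'(0)·θ(z+μ)/(θ(z)·θ(μ))`. -/
def kronecker (τ z μ : ℂ) : ℂ :=
  deriv (jtheta τ) 0 * jtheta τ (z + μ) / (jtheta τ z * jtheta τ μ)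

namespace FayAux

/-- The `n`-th term of the theta series. -/
def T1 (τ z : ℂ) (n : ℤ) : ℂ :=
  (-1 : ℂ) ^ n * Complex.exp ((Real.pi : ℂ) * Complex.I * τ * ((n : ℂ) + 1 / 2) ^ 2 +
      (2 * (n : ℂ) + 1) * (Real.pi : ℂ) * Complex.I * z)

lemma jtheta_eq (τ z : ℂ) : jtheta τ z = -I * ∑' n : ℤ, T1 τ z n := rfl

lemma exp_pi_int (n : ℤ) : ((-1 : ℂ)) ^ n = Complex.exp ((n : ℂ) * ((Real.pi : ℂ) * I)) := by
  rw [Complex.exp_int_mul, Complex.exp_pi_mul_I]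

lemma exp_eq_exp_of (A B : ℂ) (m : ℤ) (h : A - B = (m : ℂ) * (2 * (Real.pi : ℂ) * I)) :
    Complex.exp A = Complex.exp B := by
  have hA : A = (m : ℂ) * (2 * (Real.pi : ℂ) * I) + B := by linear_combination h
  rw [hA, Complex.exp_add, Complex.exp_int_mul_two_pi_mul_I, one_mul]

lemma T1_apply (τ z : ℂ) (n : ℤ) :
    T1 τ z n = Complex.exp ((n : ℂ) * ((Real.pi : ℂ) * I) +
      ((Real.pi : ℂ) * I * τ * ((n : ℂ) + 1 / 2) ^ 2 + (2 * (n : ℂ) + 1) * (Real.pi : ℂ) * I * z)) := by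
  rw [T1, exp_pi_int, ← Complex.exp_add]

end FayAux

namespace FayAux

/-- Terms of the auxiliary theta functions at parameter `2τ`. -/
def TF (τ z : ℂ) (k : ℤ) : ℂ :=
  Complex.exp (2 * (Real.pi : ℂ) * I * τ * (k : ℂ) ^ 2 + 2 * (k : ℂ) * (Real.pi : ℂ) * I * z)

def TG (τ z : ℂ) (k : ℤ) : ℂ :=
  Complex.exp (2 * (Real.pi : ℂ) * I * τ * ((k : ℂ) + 1 / 2) ^ 2 +
    (2 * (k : ℂ) + 1) * (Real.pi : ℂ) * I * z)

def FF (τ z : ℂ) : ℂ := ∑' k : ℤ, TF τ z k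
def GG (τ z : ℂ) : ℂ := ∑' k : ℤ, TG τ z k

lemma T1_eq_jacobi (τ z : ℂ) (n : ℤ) :
    T1 τ z n = Complex.exp ((Real.pi : ℂ) * I * τ / 4 + (Real.pi : ℂ) * I * z) *
      jacobiTheta₂_term n (z + τ / 2 + 1 / 2) τ := by
  rw [T1_apply, jacobiTheta₂_term, ← Complex.exp_add]
  exact exp_eq_exp_of _ _ 0 (by push_cast; ring)

lemma TF_eq_jacobi (τ z : ℂ) (k : ℤ) : TF τ z k = jacobiTheta₂_term k z (2 * τ) := by
  rw [TF, jacobiTheta₂_term]; exact exp_eq_exp_of _ _ 0 (by push_cast; ring)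

lemma pt_TG (τ z : ℂ) (n : ℤ) :
    T1 (2 * τ) (z - 1 / 2) n = Complex.exp (-((Real.pi : ℂ) * I) / 2) * TG τ z n := by
  rw [T1_apply, TG, ← Complex.exp_add]
  exact exp_eq_exp_of _ _ 0 (by push_cast; ring)

lemma pt_TF (τ z : ℂ) (n : ℤ) :
    T1 (2 * τ) (z - τ - 1 / 2) n =
      Complex.exp (-((Real.pi : ℂ) * I) / 2 - (Real.pi : ℂ) * I * τ / 2 + (Real.pi : ℂ) * I * z) *
        TF τ z n := by
  rw [T1_apply, TF, ← Complex.exp_add]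
  exact exp_eq_exp_of _ _ 0 (by push_cast; ring)

lemma summable_norm_jacobi {τ : ℂ} (hτ : 0 < τ.im) (z : ℂ) :
    Summable fun n : ℤ => ‖jacobiTheta₂_term n z τ‖ := by
  refine (summable_pow_mul_jacobiTheta₂_term_bound |z.im| hτ 0).of_nonneg_of_le
    (fun _ => norm_nonneg _) (fun n => ?_)
  simpa using norm_jacobiTheta₂_term_le hτ le_rfl le_rfl n

lemma summable_norm_T1 {τ : ℂ} (hτ : 0 < τ.im) (z : ℂ) :
    Summable fun n : ℤ => ‖T1 τ z n‖ := by
  simp_rw [T1_eq_jacobi, norm_mul]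
  exact (summable_norm_jacobi hτ _).mul_left _

lemma two_tau_im {τ : ℂ} (hτ : 0 < τ.im) : 0 < (2 * τ).im := by
  rw [show (2 : ℂ) * τ = τ + τ by ring, Complex.add_im]; positivity

lemma summable_norm_TF {τ : ℂ} (hτ : 0 < τ.im) (z : ℂ) :
    Summable fun k : ℤ => ‖TF τ z k‖ := by
  simp_rw [TF_eq_jacobi]
  exact summable_norm_jacobi (two_tau_im hτ) z

lemma TG_eq_T1 (τ z : ℂ) (k : ℤ) :
    TG τ z k = Complex.exp (((Real.pi : ℂ) * I) / 2) * T1 (2 * τ) (z - 1 / 2) k := by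
  rw [pt_TG, ← mul_assoc, ← Complex.exp_add]
  rw [show (Real.pi : ℂ) * I / 2 + -((Real.pi : ℂ) * I) / 2 = 0 by ring, Complex.exp_zero, one_mul]

lemma summable_norm_TG {τ : ℂ} (hτ : 0 < τ.im) (z : ℂ) :
    Summable fun k : ℤ => ‖TG τ z k‖ := by
  simp_rw [TG_eq_T1, norm_mul]
  exact (summable_norm_T1 (two_tau_im hτ) _).mul_left _

lemma hasSum_mul_pair {f g : ℤ → ℂ} (hf : Summable fun n => ‖f n‖)
    (hg : Summable fun n => ‖g n‖) :
    HasSum (fun p : ℤ × ℤ => f p.1 * g p.2) ((∑' n, f n) * ∑' n, g n) := by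
  have hs := summable_mul_of_summable_norm hf hg
  have ht := tsum_mul_tsum_of_summable_norm hf hg
  exact ht ▸ hs.hasSum

end FayAux

namespace FayAux

def i₁ (p : ℤ × ℤ) : ℤ × ℤ := (p.1 + p.2, p.1 - p.2 - 1)
def i₂ (p : ℤ × ℤ) : ℤ × ℤ := (p.1 + p.2, p.1 - p.2)

lemma i₁_inj : Function.Injective i₁ := by
  intro p q h
  simp only [i₁, Prod.mk.injEq, Prod.ext_iff] at h ⊢
  omega

lemma i₂_inj : Function.Injective i₂ := by
  intro p q h
  simp only [i₂, Prod.mk.injEq, Prod.ext_iff] at h ⊢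
  omega

lemma isCompl_ranges : IsCompl (Set.range i₁) (Set.range i₂) := by
  constructor
  · rw [Set.disjoint_iff_inter_eq_empty, Set.eq_empty_iff_forall_notMem]
    rintro x ⟨⟨p, hp⟩, ⟨q, hq⟩⟩
    rw [← hq] at hp
    simp only [i₁, i₂, Prod.ext_iff] at hp
    omega
  · rw [codisjoint_iff_le_sup]
    rintro ⟨m, n⟩ -
    rcases Int.even_or_odd (m + n) with ⟨c, hc⟩ | ⟨c, hc⟩
    · exact Or.inr ⟨(c, m - c), by simp only [i₂, Prod.ext_iff]; omega⟩
    · exact Or.inl ⟨(c + 1, m - c - 1), by simp only [i₁, Prod.ext_iff]; omega⟩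

lemma pt_inl (τ u v : ℂ) (k l : ℤ) :
    T1 τ u (k + l) * T1 τ v (k - l - 1) =
      Complex.exp ((Real.pi : ℂ) * I) * (TF τ (u + v) k * TG τ (u - v) l) := by
  rw [T1_apply, T1_apply, TF, TG, ← Complex.exp_add, ← Complex.exp_add, ← Complex.exp_add]
  exact exp_eq_exp_of _ _ (k - 1) (by push_cast; ring)

lemma pt_inr (τ u v : ℂ) (k l : ℤ) :
    T1 τ u (k + l) * T1 τ v (k - l) = TG τ (u + v) k * TF τ (u - v) l := by
  rw [T1_apply, T1_apply, TF, TG, ← Complex.exp_add, ← Complex.exp_add]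
  exact exp_eq_exp_of _ _ k (by push_cast; ring)

set_option maxHeartbeats 1000000 in
theorem MQI {τ : ℂ} (hτ : 0 < τ.im) (u v : ℂ) :
    jtheta τ u * jtheta τ v =
      FF τ (u + v) * GG τ (u - v) - GG τ (u + v) * FF τ (u - v) := by
  have hprod : HasSum (fun p : ℤ × ℤ => T1 τ u p.1 * T1 τ v p.2)
      ((∑' n, T1 τ u n) * ∑' n, T1 τ v n) :=
    hasSum_mul_pair (summable_norm_T1 hτ u) (summable_norm_T1 hτ v)
  have h1 : HasSum ((fun p : ℤ × ℤ => T1 τ u p.1 * T1 τ v p.2) ∘ i₁)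
      (-(FF τ (u + v) * GG τ (u - v))) := by
    have hbase := (hasSum_mul_pair (summable_norm_TF hτ (u + v))
      (summable_norm_TG hτ (u - v))).neg
    have hfun : ((fun p : ℤ × ℤ => T1 τ u p.1 * T1 τ v p.2) ∘ i₁)
        = fun p : ℤ × ℤ => -(TF τ (u + v) p.1 * TG τ (u - v) p.2) := by
      funext p
      simp only [Function.comp, i₁]
      rw [pt_inl τ u v p.1 p.2, Complex.exp_pi_mul_I]; ring
    rw [hfun]; exact hbase
  have h2 : HasSum ((fun p : ℤ × ℤ => T1 τ u p.1 * T1 τ v p.2) ∘ i₂)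
      (GG τ (u + v) * FF τ (u - v)) := by
    have hbase := hasSum_mul_pair (summable_norm_TG hτ (u + v)) (summable_norm_TF hτ (u - v))
    have hfun : ((fun p : ℤ × ℤ => T1 τ u p.1 * T1 τ v p.2) ∘ i₂)
        = fun p : ℤ × ℤ => TG τ (u + v) p.1 * TF τ (u - v) p.2 := by
      funext p
      simp only [Function.comp, i₂]
      exact pt_inr τ u v p.1 p.2
    rw [hfun]; exact hbase
  have H : HasSum (fun p : ℤ × ℤ => T1 τ u p.1 * T1 τ v p.2)
      (-(FF τ (u + v) * GG τ (u - v)) + GG τ (u + v) * FF τ (u - v)) :=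
    HasSum.add_isCompl isCompl_ranges (i₁_inj.hasSum_range_iff.mpr h1)
      (i₂_inj.hasSum_range_iff.mpr h2)
  have huniq := hprod.unique H
  rw [jtheta_eq, jtheta_eq]
  have hI := Complex.I_sq
  linear_combination ((∑' n, T1 τ u n) * ∑' n, T1 τ v n) * hI - huniq

end FayAux

namespace FayAux

lemma exp_neg_pi_half_mul : (-I) * Complex.exp (-((Real.pi : ℂ) * I) / 2) = -1 := by
  have h : Complex.exp (-((Real.pi : ℂ) * I) / 2) * Complex.exp (((Real.pi : ℂ) * I) / 2) = 1 := by
    rw [← Complex.exp_add, show -((Real.pi : ℂ) * I) / 2 + (Real.pi : ℂ) * I / 2 = 0 by ring,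
      Complex.exp_zero]
  have h2 : Complex.exp (((Real.pi : ℂ) * I) / 2) = I := by
    rw [show ((Real.pi : ℂ) * I) / 2 = ((Real.pi / 2 : ℝ) : ℂ) * I by push_cast; ring,
      Complex.exp_mul_I, ← Complex.ofReal_cos, ← Complex.ofReal_sin]
    norm_num [Real.cos_pi_div_two, Real.sin_pi_div_two]
  rw [h2] at h
  have h4 : I * -I = 1 := by
    rw [mul_neg, Complex.I_mul_I, neg_neg]
  have hE : Complex.exp (-((Real.pi : ℂ) * I) / 2) = -I := by
    calc Complex.exp (-((Real.pi : ℂ) * I) / 2)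
        = Complex.exp (-((Real.pi : ℂ) * I) / 2) * (I * -I) := by rw [h4, mul_one]
      _ = (Complex.exp (-((Real.pi : ℂ) * I) / 2) * I) * -I := by ring
      _ = -I := by rw [h, one_mul]
  rw [hE, neg_mul_neg, Complex.I_mul_I]

/-- `G(w) = -θ(w - 1/2 | 2τ)`. -/
lemma GG_eq (τ w : ℂ) : jtheta (2 * τ) (w - 1 / 2) = -GG τ w := by
  rw [jtheta_eq]
  have : ∑' n : ℤ, T1 (2 * τ) (w - 1 / 2) n
      = Complex.exp (-((Real.pi : ℂ) * I) / 2) * GG τ w := by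
    rw [GG, ← tsum_mul_left]
    exact tsum_congr fun n => pt_TG τ w n
  rw [this, ← mul_assoc, exp_neg_pi_half_mul]; ring

/-- `F(x) = -exp(πiτ/2 - πix) θ(x - τ - 1/2 | 2τ)`. -/
lemma FF_eq (τ x : ℂ) : jtheta (2 * τ) (x - τ - 1 / 2) =
    -Complex.exp (-(Real.pi : ℂ) * I * τ / 2 + (Real.pi : ℂ) * I * x) * FF τ x := by
  rw [jtheta_eq]
  have : ∑' n : ℤ, T1 (2 * τ) (x - τ - 1 / 2) n
      = Complex.exp (-((Real.pi : ℂ) * I) / 2 - (Real.pi : ℂ) * I * τ / 2 + (Real.pi : ℂ) * I * x)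
          * FF τ x := by
    rw [FF, ← tsum_mul_left]
    exact tsum_congr fun n => pt_TF τ x n
  rw [this, show (-((Real.pi : ℂ) * I) / 2 - (Real.pi : ℂ) * I * τ / 2 + (Real.pi : ℂ) * I * x)
      = -((Real.pi : ℂ) * I) / 2 + (-(Real.pi : ℂ) * I * τ / 2 + (Real.pi : ℂ) * I * x) by ring,
    Complex.exp_add, ← mul_assoc, ← mul_assoc, exp_neg_pi_half_mul]
  ring

lemma FF_one (τ : ℂ) : FF τ 1 = FF τ 0 := by
  refine tsum_congr fun k => ?_
  rw [TF, TF]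
  exact exp_eq_exp_of _ _ k (by push_cast; ring)

lemma GG_one (τ : ℂ) : GG τ 1 = -GG τ 0 := by
  have : ∀ k : ℤ, TG τ 1 k = Complex.exp ((Real.pi : ℂ) * I) * TG τ 0 k := by
    intro k
    rw [TG, TG, ← Complex.exp_add]
    exact exp_eq_exp_of _ _ k (by push_cast; ring)
  rw [GG, tsum_congr this, tsum_mul_left, Complex.exp_pi_mul_I, ← GG]; ring

/-- Quasi-periodicity: integer shifts. -/
lemma jtheta_add_int (τ z : ℂ) (a : ℤ) :
    jtheta τ (z + (a : ℂ)) = Complex.exp ((a : ℂ) * ((Real.pi : ℂ) * I)) * jtheta τ z := by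
  rw [jtheta_eq, jtheta_eq]
  have : ∀ n : ℤ, T1 τ (z + (a : ℂ)) n
      = Complex.exp ((a : ℂ) * ((Real.pi : ℂ) * I)) * T1 τ z n := by
    intro n
    rw [T1_apply, T1_apply, ← Complex.exp_add]
    exact exp_eq_exp_of _ _ (n * a) (by push_cast; ring)
  rw [tsum_congr this, tsum_mul_left]; ring

/-- Quasi-periodicity: `τ`-multiples. -/
lemma jtheta_add_int_mul_tau (τ z : ℂ) (k : ℤ) :
    jtheta τ (z + (k : ℂ) * τ) =
      Complex.exp ((k : ℂ) * ((Real.pi : ℂ) * I) - (Real.pi : ℂ) * I * (k : ℂ) ^ 2 * τ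
        - 2 * (k : ℂ) * (Real.pi : ℂ) * I * z) * jtheta τ z := by
  rw [jtheta_eq, jtheta_eq]
  have hre : ∑' n : ℤ, T1 τ (z + (k : ℂ) * τ) n
      = ∑' n : ℤ, T1 τ (z + (k : ℂ) * τ) ((Equiv.subRight k) n) :=
    ((Equiv.subRight k).tsum_eq _).symm
  have : ∀ n : ℤ, T1 τ (z + (k : ℂ) * τ) ((Equiv.subRight k) n)
      = Complex.exp ((k : ℂ) * ((Real.pi : ℂ) * I) - (Real.pi : ℂ) * I * (k : ℂ) ^ 2 * τ
          - 2 * (k : ℂ) * (Real.pi : ℂ) * I * z) * T1 τ z n := by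
    intro n
    show T1 τ (z + (k : ℂ) * τ) (n - k) = _
    rw [T1_apply, T1_apply, ← Complex.exp_add]
    exact exp_eq_exp_of _ _ (-k) (by push_cast; ring)
  rw [hre, tsum_congr this, tsum_mul_left]; ring

/-- Oddness. -/
lemma jtheta_neg (τ z : ℂ) : jtheta τ (-z) = -jtheta τ z := by
  rw [jtheta_eq, jtheta_eq]
  have hre : ∑' n : ℤ, T1 τ (-z) n
      = ∑' n : ℤ, T1 τ (-z) (((Equiv.addRight (1 : ℤ)).trans (Equiv.neg ℤ)) n) :=
    (((Equiv.addRight (1 : ℤ)).trans (Equiv.neg ℤ)).tsum_eq _).symm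
  have : ∀ n : ℤ, T1 τ (-z) (((Equiv.addRight (1 : ℤ)).trans (Equiv.neg ℤ)) n)
      = Complex.exp ((Real.pi : ℂ) * I) * T1 τ z n := by
    intro n
    show T1 τ (-z) (-(n + 1)) = _
    rw [T1_apply, T1_apply, ← Complex.exp_add]
    exact exp_eq_exp_of _ _ (-(n + 1)) (by push_cast; ring)
  rw [hre, tsum_congr this, tsum_mul_left, Complex.exp_pi_mul_I]; ring

lemma jtheta_zero (τ : ℂ) : jtheta τ 0 = 0 := by
  have := jtheta_neg τ 0
  rw [neg_zero] at this
  linear_combination this / 2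

end FayAux

namespace FayAux

def good (τ : ℂ) : Prop := ∀ z : ℂ, z ∉ lattice τ → jtheta τ z ≠ 0

lemma im_lattice {τ u : ℂ} {a b : ℤ} (h : u = (a : ℂ) + τ * (b : ℂ)) :
    u.im = τ.im * (b : ℝ) := by
  have := congrArg Complex.im h
  simpa [Complex.add_im, Complex.mul_im] using this

lemma re_lattice {τ u : ℂ} {a b : ℤ} (h : u = (a : ℂ) + τ * (b : ℂ)) :
    u.re = (a : ℝ) + τ.re * (b : ℝ) := by
  have := congrArg Complex.re h
  simpa [Complex.add_re, Complex.mul_re] using this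

/-- points with `im = -τ.im` are not in `lattice (2τ)`. -/
lemma not_lat_neg_tau {τ : ℂ} (hτ : 0 < τ.im) {u : ℂ} (hu : u.im = -τ.im) :
    u ∉ lattice (2 * τ) := by
  rintro ⟨a, b, h⟩
  have him := im_lattice h
  rw [hu] at him
  have h2 : (2 * τ).im = 2 * τ.im := by
    rw [show (2 : ℂ) * τ = τ + τ by ring, Complex.add_im]; ring
  rw [h2] at him
  have hb : (1 : ℝ) + 2 * (b : ℝ) = 0 := by
    have hne : τ.im ≠ 0 := ne_of_gt hτ
    have hmul : τ.im * ((1 : ℝ) + 2 * (b : ℝ)) = 0 := by linear_combination -him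
    rcases mul_eq_zero.mp hmul with h' | h'
    · exact absurd h' hne
    · exact h'
  have : (1 + 2 * b : ℤ) = 0 := by exact_mod_cast hb
  omega

lemma not_lat_neg_half {τ : ℂ} (hτ : 0 < τ.im) : (-(1 / 2) : ℂ) ∉ lattice (2 * τ) := by
  rintro ⟨a, b, h⟩
  have him := im_lattice h
  have h2 : (2 * τ).im = 2 * τ.im := by
    rw [show (2 : ℂ) * τ = τ + τ by ring, Complex.add_im]; ring
  rw [h2] at him
  have him0 : (0 : ℝ) = 2 * τ.im * (b : ℝ) := by
    have : ((-(1 / 2) : ℂ)).im = 0 := by norm_num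
    rw [this] at him; exact him
  have hb : (b : ℝ) = 0 := by
    have hne : τ.im ≠ 0 := ne_of_gt hτ
    have : τ.im * (2 * (b : ℝ)) = 0 := by rw [← mul_assoc, mul_comm τ.im 2]; linarith
    rcases mul_eq_zero.mp this with h' | h'
    · exact absurd h' hne
    · linarith
  have hb0 : b = 0 := by exact_mod_cast hb
  subst hb0
  have hre := re_lattice h
  simp only [Int.cast_zero, mul_zero, add_zero] at hre
  have hre' : ((-(1 / 2) : ℂ)).re = (a : ℝ) := hre
  have : (-(1 : ℝ) / 2) = (a : ℝ) := by norm_num at hre' ⊢; linarith [hre']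
  have h2a : (2 * a : ℤ) = -1 := by
    have h2r : (2 : ℝ) * (a : ℝ) = -1 := by linarith
    exact_mod_cast h2r
  omega

lemma FF_ne_zero {τ : ℂ} (hτ : 0 < τ.im) (h2 : good (2 * τ)) (x : ℂ)
    (hx : x - τ - 1 / 2 ∉ lattice (2 * τ)) : FF τ x ≠ 0 := by
  intro h0
  have := FF_eq τ x
  rw [h0, mul_zero] at this
  exact h2 _ hx this

lemma GG_ne_zero {τ : ℂ} (hτ : 0 < τ.im) (h2 : good (2 * τ)) (w : ℂ)
    (hw : w - 1 / 2 ∉ lattice (2 * τ)) : GG τ w ≠ 0 := by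
  intro h0
  have := GG_eq τ w
  rw [h0, neg_zero] at this
  exact h2 _ hw this

lemma GG_half (τ : ℂ) : GG τ (1 / 2) = 0 := by
  have h := GG_eq τ (1 / 2)
  rw [show ((1 : ℂ) / 2 - 1 / 2) = 0 by ring, jtheta_zero] at h
  linear_combination h

end FayAux

namespace FayAux

lemma jtheta_half_sq {τ : ℂ} (hτ : 0 < τ.im) :
    jtheta τ (1 / 2) * jtheta τ (1 / 2) = 2 * (FF τ 0 * GG τ 0) := by
  have h := MQI hτ (1 / 2) (1 / 2)
  rw [show ((1 : ℂ) / 2 + 1 / 2) = 1 by ring, show ((1 : ℂ) / 2 - 1 / 2) = 0 by ring,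
    FF_one, GG_one] at h
  linear_combination h

lemma jtheta_half_ne {τ : ℂ} (hτ : 0 < τ.im) (h2 : good (2 * τ)) :
    jtheta τ (1 / 2) ≠ 0 := by
  have hFF : FF τ 0 ≠ 0 := by
    refine FF_ne_zero hτ h2 0 (not_lat_neg_tau hτ ?_)
    simp [Complex.sub_im]
  have hGG : GG τ 0 ≠ 0 := by
    refine GG_ne_zero hτ h2 0 ?_
    rw [show ((0 : ℂ) - 1 / 2) = -(1 / 2) by ring]
    exact not_lat_neg_half hτ
  intro h0
  have := jtheta_half_sq hτ
  rw [h0, mul_zero] at this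
  exact (mul_ne_zero (two_ne_zero) (mul_ne_zero hFF hGG)) this.symm

lemma descent {τ : ℂ} (hτ : 0 < τ.im) (h2 : good (2 * τ)) : good τ := by
  intro w hw hjw
  -- step 1: GG τ (2w - 1/2) = 0
  have hrel := MQI hτ w (w - 1 / 2)
  rw [show w + (w - 1 / 2) = 2 * w - 1 / 2 by ring, show w - (w - 1 / 2) = 1 / 2 by ring,
    hjw, zero_mul, GG_half, mul_zero, zero_sub] at hrel
  have hFFhalf : FF τ (1 / 2) ≠ 0 := by
    refine FF_ne_zero hτ h2 (1 / 2) (not_lat_neg_tau hτ ?_)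
    simp [Complex.sub_im]
  have hGG : GG τ (2 * w - 1 / 2) = 0 := by
    rcases mul_eq_zero.mp (neg_eq_zero.mp hrel.symm) with h' | h'
    · exact h'
    · exact absurd h' hFFhalf
  -- step 2: 2w - 1 ∈ lattice (2τ)
  have hth : jtheta (2 * τ) (2 * w - 1 / 2 - 1 / 2) = 0 := by
    rw [GG_eq, hGG, neg_zero]
  have hmem : 2 * w - 1 / 2 - 1 / 2 ∈ lattice (2 * τ) := by
    by_contra hc
    exact h2 _ hc hth
  obtain ⟨a, b, hab⟩ := hmem
  rcases Int.even_or_odd a with ⟨c, hc⟩ | ⟨c, hc⟩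
  · -- a = c + c: w = 1/2 + bτ + c, reduce to jtheta τ (1/2) = 0
    have hw' : w = ((1 : ℂ) / 2 + (b : ℂ) * τ) + ((c : ℤ) : ℂ) := by
      rw [hc] at hab
      push_cast at hab ⊢
      linear_combination hab / 2
    rw [hw', jtheta_add_int, jtheta_add_int_mul_tau] at hjw
    have h1 := jtheta_half_ne hτ h2
    rcases mul_eq_zero.mp hjw with h' | h'
    · exact Complex.exp_ne_zero _ h'
    rcases mul_eq_zero.mp h' with h'' | h''
    · exact Complex.exp_ne_zero _ h''
    · exact h1 h''
  · -- a = 2c + 1: w ∈ lattice τ, contradiction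
    refine hw ⟨c + 1, b, ?_⟩
    rw [hc] at hab
    push_cast at hab ⊢
    linear_combination hab / 2

end FayAux

namespace FayAux

def SS (z : ℂ) (n : ℕ) : ℂ :=
  ∑ j ∈ Finset.range (2 * n + 1), Complex.exp (2 * (Real.pi : ℂ) * I * ((j : ℂ) - (n : ℂ)) * z)

def TH (τ z : ℂ) (n : ℕ) : ℂ :=
  Complex.exp ((Real.pi : ℂ) * I * τ * ((n : ℂ) ^ 2 + (n : ℂ)) + (n : ℂ) * ((Real.pi : ℂ) * I))
    * SS z n

def HH (τ z : ℂ) : ℂ := ∑' n : ℕ, TH τ z n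

lemma sin_SS (z : ℂ) (n : ℕ) :
    (Complex.exp ((Real.pi : ℂ) * I * z) - Complex.exp (-((Real.pi : ℂ) * I * z))) * SS z n
      = Complex.exp ((2 * (n : ℂ) + 1) * ((Real.pi : ℂ) * I * z))
        - Complex.exp (-((2 * (n : ℂ) + 1) * ((Real.pi : ℂ) * I * z))) := by
  set w : ℂ := Complex.exp ((Real.pi : ℂ) * I * z) with hw
  have hwne : w ≠ 0 := Complex.exp_ne_zero _
  have hterm : ∀ j ∈ Finset.range (2 * n + 1),
      Complex.exp (2 * (Real.pi : ℂ) * I * ((j : ℂ) - (n : ℂ)) * z)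
        = (w * w) ^ j * (w ^ (2 * n))⁻¹ := by
    intro j _
    rw [← Complex.exp_add (((Real.pi : ℂ) * I * z)) (((Real.pi : ℂ) * I * z))]
    rw [← Complex.exp_nat_mul, ← Complex.exp_nat_mul, ← Complex.exp_neg, ← Complex.exp_add]
    congr 1
    push_cast
    ring
  rw [SS, Finset.sum_congr rfl hterm, ← Finset.sum_mul]
  have hg := geom_sum_mul (w * w) (2 * n + 1)
  have hxp : ∀ m : ℕ, w ^ m = Complex.exp ((m : ℂ) * ((Real.pi : ℂ) * I * z)) := by
    intro m; rw [← Complex.exp_nat_mul]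
  have h1 : Complex.exp ((2 * (n : ℂ) + 1) * ((Real.pi : ℂ) * I * z)) = w ^ (2 * n + 1) := by
    rw [hxp]; push_cast; ring_nf
  have h2 : Complex.exp (-((2 * (n : ℂ) + 1) * ((Real.pi : ℂ) * I * z)))
      = (w ^ (2 * n + 1))⁻¹ := by
    rw [hxp, ← Complex.exp_neg]; congr 1; push_cast; ring
  have h3 : Complex.exp (-((Real.pi : ℂ) * I * z)) = w⁻¹ := by
    rw [← Complex.exp_neg]
  rw [h1, h2, h3]
  have hWne : w ^ (2 * n + 1) ≠ 0 := pow_ne_zero _ hwne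
  have hgg : (w * w - 1) * (∑ i ∈ Finset.range (2 * n + 1), (w * w) ^ i)
      = w ^ (2 * n + 1) * w ^ (2 * n + 1) - 1 := by rw [mul_comm, hg, mul_pow]
  have hsplit : w - w⁻¹ = w⁻¹ * (w * w - 1) := by field_simp
  rw [hsplit]
  have hassoc : w⁻¹ * (w * w - 1) * ((∑ i ∈ Finset.range (2 * n + 1), (w * w) ^ i)
        * (w ^ (2 * n))⁻¹)
      = (w⁻¹ * (w ^ (2 * n))⁻¹)
        * ((w * w - 1) * (∑ i ∈ Finset.range (2 * n + 1), (w * w) ^ i)) := by ring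
  rw [hassoc, hgg]
  have hinv : w⁻¹ * (w ^ (2 * n))⁻¹ = (w ^ (2 * n + 1))⁻¹ := by
    rw [← mul_inv]; congr 1; ring
  rw [hinv, mul_sub, mul_one, ← mul_assoc, inv_mul_cancel₀ hWne, one_mul]

lemma pair_eq {τ z : ℂ} (n : ℕ) :
    T1 τ z (n : ℤ) + T1 τ z (-((n : ℤ) + 1))
      = (Complex.exp ((Real.pi : ℂ) * I * τ / 4) *
          (Complex.exp ((Real.pi : ℂ) * I * z) - Complex.exp (-((Real.pi : ℂ) * I * z))))
        * TH τ z n := by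
  have key := sin_SS z n
  have h1 : T1 τ z (n : ℤ) = Complex.exp ((Real.pi : ℂ) * I * τ / 4
      + ((Real.pi : ℂ) * I * τ * ((n : ℂ) ^ 2 + (n : ℂ)) + (n : ℂ) * ((Real.pi : ℂ) * I)))
      * Complex.exp ((2 * (n : ℂ) + 1) * ((Real.pi : ℂ) * I * z)) := by
    rw [T1_apply, ← Complex.exp_add]
    exact exp_eq_exp_of _ _ 0 (by push_cast; ring)
  have h2 : T1 τ z (-((n : ℤ) + 1)) = -(Complex.exp ((Real.pi : ℂ) * I * τ / 4
      + ((Real.pi : ℂ) * I * τ * ((n : ℂ) ^ 2 + (n : ℂ)) + (n : ℂ) * ((Real.pi : ℂ) * I)))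
      * Complex.exp (-((2 * (n : ℂ) + 1) * ((Real.pi : ℂ) * I * z)))) := by
    have hpi : ∀ A : ℂ, Complex.exp (A + (Real.pi : ℂ) * I) = -Complex.exp A := by
      intro A; rw [Complex.exp_add, Complex.exp_pi_mul_I]; ring
    rw [T1_apply, ← Complex.exp_add, ← hpi]
    exact exp_eq_exp_of _ _ (-((n : ℤ) + 1)) (by push_cast; ring)
  rw [h1, h2, TH]
  have expand : (Complex.exp ((Real.pi : ℂ) * I * τ / 4) *
        (Complex.exp ((Real.pi : ℂ) * I * z) - Complex.exp (-((Real.pi : ℂ) * I * z))))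
      * (Complex.exp ((Real.pi : ℂ) * I * τ * ((n : ℂ) ^ 2 + (n : ℂ)) + (n : ℂ) * ((Real.pi : ℂ) * I)) * SS z n)
      = Complex.exp ((Real.pi : ℂ) * I * τ / 4
          + ((Real.pi : ℂ) * I * τ * ((n : ℂ) ^ 2 + (n : ℂ)) + (n : ℂ) * ((Real.pi : ℂ) * I)))
        * ((Complex.exp ((Real.pi : ℂ) * I * z) - Complex.exp (-((Real.pi : ℂ) * I * z))) * SS z n) := by
    rw [Complex.exp_add ((Real.pi : ℂ) * I * τ / 4)
      ((Real.pi : ℂ) * I * τ * ((n : ℂ) ^ 2 + (n : ℂ)) + (n : ℂ) * ((Real.pi : ℂ) * I))]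
    ring
  rw [expand, key]
  ring

end FayAux

namespace FayAux

lemma norm_exp_re (X : ℂ) : ‖Complex.exp X‖ = Real.exp X.re := by
  rw [Complex.norm_exp]

lemma norm_SS_le (z : ℂ) (n : ℕ) :
    ‖SS z n‖ ≤ (2 * (n : ℝ) + 1) * Real.exp (2 * Real.pi * n * |z.im|) := by
  refine (norm_sum_le _ _).trans ?_
  have hb : ∀ j ∈ Finset.range (2 * n + 1),
      ‖Complex.exp (2 * (Real.pi : ℂ) * I * ((j : ℂ) - (n : ℂ)) * z)‖
        ≤ Real.exp (2 * Real.pi * n * |z.im|) := by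
    intro j hj
    rw [norm_exp_re, Real.exp_le_exp]
    have hre : (2 * (Real.pi : ℂ) * I * ((j : ℂ) - (n : ℂ)) * z).re
        = -(2 * Real.pi * ((j : ℝ) - (n : ℝ)) * z.im) := by
      simp [Complex.mul_re, Complex.mul_im]
    rw [hre]
    have hj' : (j : ℝ) ≤ 2 * n := by
      have := Finset.mem_range.mp hj
      exact_mod_cast Nat.lt_succ_iff.mp this
    have habs : |(j : ℝ) - (n : ℝ)| ≤ (n : ℝ) := by
      rw [abs_le]
      constructor <;> [linarith [Nat.cast_nonneg (α := ℝ) j]; linarith]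
    calc -(2 * Real.pi * ((j : ℝ) - (n : ℝ)) * z.im)
        ≤ |2 * Real.pi * ((j : ℝ) - (n : ℝ)) * z.im| := neg_le_abs _
      _ = 2 * Real.pi * |(j : ℝ) - (n : ℝ)| * |z.im| := by
          rw [abs_mul, abs_mul,
            _root_.abs_of_nonneg (show (0:ℝ) ≤ 2 * Real.pi by positivity)]
      _ ≤ 2 * Real.pi * (n : ℝ) * |z.im| := by gcongr
  calc ∑ j ∈ Finset.range (2 * n + 1),
        ‖Complex.exp (2 * (Real.pi : ℂ) * I * ((j : ℂ) - (n : ℂ)) * z)‖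
      ≤ ∑ _j ∈ Finset.range (2 * n + 1), Real.exp (2 * Real.pi * n * |z.im|) :=
        Finset.sum_le_sum hb
    _ = (2 * (n : ℝ) + 1) * Real.exp (2 * Real.pi * n * |z.im|) := by
        rw [Finset.sum_const, Finset.card_range]
        push_cast
        ring

lemma norm_TH_le {τ z : ℂ} (ht : 1 ≤ τ.im) (hz : |z.im| ≤ τ.im / 2) (n : ℕ) :
    ‖TH τ z n‖ ≤ (2 * (n : ℝ) + 1) * Real.exp (-3 * n) := by
  have hpi3 := Real.pi_gt_three
  have hpip := Real.pi_pos
  rw [TH, norm_mul, norm_exp_re]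
  have hre : ((Real.pi : ℂ) * I * τ * ((n : ℂ) ^ 2 + (n : ℂ)) + (n : ℂ) * ((Real.pi : ℂ) * I)).re
      = -(Real.pi * τ.im * ((n : ℝ) ^ 2 + (n : ℝ))) := by
    simp [pow_two, Complex.add_re, Complex.mul_re, Complex.mul_im]
  rw [hre]
  calc Real.exp (-(Real.pi * τ.im * ((n : ℝ) ^ 2 + (n : ℝ)))) * ‖SS z n‖
      ≤ Real.exp (-(Real.pi * τ.im * ((n : ℝ) ^ 2 + (n : ℝ))))
          * ((2 * (n : ℝ) + 1) * Real.exp (2 * Real.pi * n * |z.im|)) := by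
        gcongr
        exact norm_SS_le z n
    _ = (2 * (n : ℝ) + 1) * Real.exp (-(Real.pi * τ.im * ((n : ℝ) ^ 2 + (n : ℝ)))
          + 2 * Real.pi * n * |z.im|) := by
        rw [Real.exp_add]; ring
    _ ≤ (2 * (n : ℝ) + 1) * Real.exp (-3 * n) := by
        have hn : (0:ℝ) ≤ (n:ℝ) := Nat.cast_nonneg n
        have habs : (0:ℝ) ≤ |z.im| := abs_nonneg _
        have hsq : (n : ℝ) ≤ (n : ℝ) ^ 2 := by
          rcases Nat.eq_zero_or_pos n with h | h
          · simp [h]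
          · have h1 : (1:ℝ) ≤ (n:ℝ) := by exact_mod_cast h
            nlinarith
        have h1 : 2 * Real.pi * n * |z.im| ≤ Real.pi * τ.im * n := by
          nlinarith [mul_le_mul_of_nonneg_left hz
            (show (0:ℝ) ≤ 2 * Real.pi * n by positivity)]
        have h2 : 3 * (n:ℝ) ≤ Real.pi * τ.im * (n : ℝ) ^ 2 := by
          have hp : (3:ℝ) ≤ Real.pi * τ.im := by nlinarith
          nlinarith [mul_le_mul_of_nonneg_left hsq (show (0:ℝ) ≤ 3 by norm_num),
            mul_le_mul_of_nonneg_right hp (sq_nonneg ((n:ℝ)))]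
        have hexp : -(Real.pi * τ.im * ((n : ℝ) ^ 2 + (n : ℝ)))
            + 2 * Real.pi * n * |z.im| ≤ -3 * n := by nlinarith
        exact mul_le_mul_of_nonneg_left (Real.exp_le_exp.mpr hexp) (by positivity)

lemma exp_neg_three_le : Real.exp (-3) ≤ 1 / 16 := by
  have h3 : (16:ℝ) < Real.exp 3 := by
    have h := Real.exp_one_gt_d9
    have h' : Real.exp 3 = Real.exp 1 ^ 3 := by
      rw [← Real.exp_nat_mul]; norm_num
    have hc : (2.7182818283:ℝ) ^ 3 < Real.exp 1 ^ 3 :=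
      pow_lt_pow_left₀ h (by norm_num) (by norm_num)
    have h16 : (16:ℝ) < (2.7182818283:ℝ) ^ 3 := by norm_num
    rw [h']
    linarith
  have hm : Real.exp (-3) * Real.exp 3 = 1 := by
    rw [← Real.exp_add]; norm_num
  nlinarith [Real.exp_pos (-3), h3, hm]

end FayAux

namespace FayAux

lemma lin5 (n : ℕ) : 2 * (n : ℝ) + 3 ≤ (5 : ℝ) ^ (n + 1) := by
  induction n with
  | zero => norm_num
  | succ m ih =>
      have h5 : (1:ℝ) ≤ (5:ℝ) ^ (m + 1) := one_le_pow₀ (by norm_num)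
      push_cast
      calc 2 * ((m : ℝ) + 1) + 3 = (2 * (m:ℝ) + 3) + 2 := by ring
        _ ≤ (5:ℝ) ^ (m + 1) + 2 := by linarith
        _ ≤ (5:ℝ) ^ (m + 1 + 1) := by
            have hps : (5:ℝ) ^ (m + 1 + 1) = 5 ^ (m + 1) * 5 := pow_succ _ _
            linarith

lemma TH_succ_le {τ z : ℂ} (ht : 1 ≤ τ.im) (hz : |z.im| ≤ τ.im / 2) (n : ℕ) :
    ‖TH τ z (n + 1)‖ ≤ (5 / 16 : ℝ) ^ (n + 1) := by
  refine (norm_TH_le ht hz (n + 1)).trans ?_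
  push_cast
  have hexp : Real.exp (-3 * ((n : ℝ) + 1)) ≤ (1 / 16 : ℝ) ^ (n + 1) := by
    have : Real.exp (-3 * ((n : ℝ) + 1)) = Real.exp (-3) ^ (n + 1) := by
      rw [← Real.exp_nat_mul]
      congr 1
      push_cast
      ring
    rw [this]
    exact pow_le_pow_left₀ (Real.exp_pos _).le exp_neg_three_le _
  have hlin : (2 * ((n : ℝ) + 1) + 1) ≤ (5 : ℝ) ^ (n + 1) := by
    have := lin5 n
    linarith
  calc (2 * ((n : ℝ) + 1) + 1) * Real.exp (-3 * ((n : ℝ) + 1))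
      ≤ (5 : ℝ) ^ (n + 1) * (1 / 16 : ℝ) ^ (n + 1) :=
        mul_le_mul hlin hexp (Real.exp_pos _).le (by positivity)
    _ = (5 / 16 : ℝ) ^ (n + 1) := by
        rw [← mul_pow]
        norm_num

lemma summable_TH {τ z : ℂ} (ht : 1 ≤ τ.im) (hz : |z.im| ≤ τ.im / 2) :
    Summable (TH τ z) := by
  rw [← summable_nat_add_iff 1]
  have geo : Summable (fun n : ℕ => (5 / 16 : ℝ) ^ (n + 1)) := by
    simpa [pow_succ] using
      (summable_geometric_of_lt_one (by norm_num : (0:ℝ) ≤ 5/16) (by norm_num)).mul_right (5/16)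
  exact Summable.of_norm_bounded geo (fun n => TH_succ_le ht hz n)

lemma HH_ne_zero {τ z : ℂ} (ht : 1 ≤ τ.im) (hz : |z.im| ≤ τ.im / 2) : HH τ z ≠ 0 := by
  have hsum := summable_TH ht hz
  have h0 : TH τ z 0 = 1 := by
    rw [TH, SS]
    norm_num
  have hsplit : HH τ z = 1 + ∑' n : ℕ, TH τ z (n + 1) := by
    rw [HH, Summable.tsum_eq_zero_add hsum, h0]
  have hnormsum : Summable (fun n : ℕ => ‖TH τ z (n + 1)‖) := by
    have geo : Summable (fun n : ℕ => (5 / 16 : ℝ) ^ (n + 1)) := by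
      simpa [pow_succ] using
        (summable_geometric_of_lt_one (by norm_num : (0:ℝ) ≤ 5/16) (by norm_num)).mul_right (5/16)
    exact Summable.of_nonneg_of_le (fun _ => norm_nonneg _) (fun n => TH_succ_le ht hz n) geo
  have hR : ‖∑' n : ℕ, TH τ z (n + 1)‖ ≤ 5 / 11 := by
    refine (norm_tsum_le_tsum_norm hnormsum).trans ?_
    have geo : Summable (fun n : ℕ => (5 / 16 : ℝ) ^ (n + 1)) := by
      simpa [pow_succ] using
        (summable_geometric_of_lt_one (by norm_num : (0:ℝ) ≤ 5/16) (by norm_num)).mul_right (5/16)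
    refine (hnormsum.tsum_le_tsum (fun n => TH_succ_le ht hz n) geo).trans ?_
    have : ∑' n : ℕ, (5 / 16 : ℝ) ^ (n + 1) = (5/16) * ∑' n : ℕ, (5 / 16 : ℝ) ^ n := by
      simp_rw [pow_succ']
      rw [tsum_mul_left]
    rw [this, tsum_geometric_of_lt_one (by norm_num) (by norm_num)]
    norm_num
  intro hzero
  rw [hzero] at hsplit
  have : ∑' n : ℕ, TH τ z (n + 1) = -1 := by linear_combination -hsplit
  rw [this] at hR
  norm_num at hR

lemma jtheta_factor {τ : ℂ} (hτ : 0 < τ.im) (z : ℂ) :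
    jtheta τ z = -I * ((Complex.exp ((Real.pi : ℂ) * I * τ / 4) *
      (Complex.exp ((Real.pi : ℂ) * I * z) - Complex.exp (-((Real.pi : ℂ) * I * z))))
        * HH τ z) := by
  rw [jtheta_eq]
  congr 1
  rw [HH, ← tsum_mul_left, ← tsum_nat_add_neg_add_one (summable_norm_T1 hτ z).of_norm]
  exact tsum_congr fun n => pair_eq n

lemma base_good {τ : ℂ} (h1 : 1 ≤ τ.im) : good τ := by
  have hτ : 0 < τ.im := lt_of_lt_of_le one_pos h1
  intro z hz hjz
  set k : ℤ := round (z.im / τ.im) with hk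
  set z' : ℂ := z - (k : ℂ) * τ with hz'
  have him : |z'.im| ≤ τ.im / 2 := by
    have h2 : z'.im = z.im - (k : ℝ) * τ.im := by
      rw [hz']
      simp [Complex.sub_im, Complex.mul_im]
    have h3 : |z.im / τ.im - (k : ℝ)| ≤ 1 / 2 := abs_sub_round _
    have h4 : z.im - (k : ℝ) * τ.im = τ.im * (z.im / τ.im - (k : ℝ)) := by
      field_simp
    rw [h2, h4, abs_mul, _root_.abs_of_nonneg hτ.le]
    calc τ.im * |z.im / τ.im - (k : ℝ)| ≤ τ.im * (1 / 2) := by gcongr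
      _ = τ.im / 2 := by ring
  have hzeq : z = z' + (k : ℂ) * τ := by rw [hz']; ring
  rw [hzeq, jtheta_add_int_mul_tau] at hjz
  have hjz' : jtheta τ z' = 0 := by
    rcases mul_eq_zero.mp hjz with h' | h'
    · exact absurd h' (Complex.exp_ne_zero _)
    · exact h'
  rw [jtheta_factor hτ z'] at hjz'
  have hH := HH_ne_zero h1 him
  have hsin : Complex.exp ((Real.pi : ℂ) * I * z') - Complex.exp (-((Real.pi : ℂ) * I * z')) ≠ 0 := by
    intro heq
    have heq2 : Complex.exp ((Real.pi : ℂ) * I * z') = Complex.exp (-((Real.pi : ℂ) * I * z')) :=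
      sub_eq_zero.mp heq
    have hone : Complex.exp (2 * (Real.pi : ℂ) * I * z') = 1 := by
      have := congrArg (· * Complex.exp ((Real.pi : ℂ) * I * z')) heq2
      simp only [← Complex.exp_add] at this
      rw [show -((Real.pi : ℂ) * I * z') + (Real.pi : ℂ) * I * z' = 0 by ring,
        Complex.exp_zero] at this
      rw [show (Real.pi : ℂ) * I * z' + (Real.pi : ℂ) * I * z' = 2 * (Real.pi : ℂ) * I * z'
        by ring] at this
      exact this
    obtain ⟨m, hm⟩ := Complex.exp_eq_one_iff.mp hone
    have hz'm : z' = (m : ℂ) := by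
      have hπI : (2 : ℂ) * (Real.pi : ℂ) * I ≠ 0 := by
        simp [Complex.I_ne_zero, Real.pi_ne_zero]
      apply mul_left_cancel₀ hπI
      linear_combination hm
    exact hz ⟨m, k, by rw [hzeq, hz'm]; ring⟩
  rcases mul_eq_zero.mp hjz' with h' | h'
  · simp [Complex.I_ne_zero] at h'
  rcases mul_eq_zero.mp h' with h'' | h''
  · rcases mul_eq_zero.mp h'' with h3 | h3
    · exact Complex.exp_ne_zero _ h3
    · exact hsin h3
  · exact hH h''

end FayAux

namespace FayAux

lemma good_aux : ∀ (K : ℕ) (τ : ℂ), 0 < τ.im → good ((2 ^ K : ℂ) * τ) → good τ := by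
  intro K
  induction K with
  | zero => intro τ _ h; simpa using h
  | succ n ih =>
      intro τ hτ h
      have h2 : good ((2 ^ n : ℂ) * (2 * τ)) := by
        rw [show (2 ^ n : ℂ) * (2 * τ) = (2 ^ (n + 1) : ℂ) * τ by ring]
        exact h
      exact descent hτ (ih (2 * τ) (two_tau_im hτ) h2)

lemma jtheta_ne_zero {τ : ℂ} (hτ : 0 < τ.im) {z : ℂ} (hz : z ∉ lattice τ) :
    jtheta τ z ≠ 0 := by
  obtain ⟨K, hK⟩ := pow_unbounded_of_one_lt (1 / τ.im) (one_lt_two (α := ℝ))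
  have him : ((2 ^ K : ℂ) * τ).im = 2 ^ K * τ.im := by
    have h' : (2 ^ K : ℂ) = ((2 ^ K : ℝ) : ℂ) := by push_cast; ring
    rw [h', Complex.mul_im, Complex.ofReal_re, Complex.ofReal_im]
    ring
  have h1 : 1 ≤ ((2 ^ K : ℂ) * τ).im := by
    rw [him]
    rw [div_lt_iff₀ hτ] at hK
    nlinarith [hτ]
  exact good_aux K τ hτ (base_good h1) z hz

/-- Flexible version of the quadratic identity. -/
lemma MQI' {τ : ℂ} (hτ : 0 < τ.im) (u v s d : ℂ) (hs : u + v = s) (hd : u - v = d) :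
    jtheta τ u * jtheta τ v = FF τ s * GG τ d - GG τ s * FF τ d := by
  subst hs; subst hd; exact MQI hτ u v

/-- The Weierstrass three-term identity, in the form needed for Fay. -/
lemma theta3 {τ : ℂ} (hτ : 0 < τ.im) (z z' μ μ' : ℂ) :
    jtheta τ (z + μ) * jtheta τ (z' + μ') * (jtheta τ (z + z') * jtheta τ (μ - μ')) =
      jtheta τ (z + z' + μ') * jtheta τ μ * (jtheta τ (z + (μ - μ')) * jtheta τ z') -
        jtheta τ (z + z' + μ) * jtheta τ μ' * (jtheta τ z * jtheta τ (z' + (μ' - μ))) := by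
  have e1 := MQI' hτ (z + μ) (z' + μ') (z + z' + μ + μ') (z + μ - z' - μ') (by ring) (by ring)
  have e2 := MQI' hτ (z + z') (μ - μ') (z + z' + μ - μ') (z + z' - μ + μ') (by ring) (by ring)
  have e3 := MQI' hτ (z + z' + μ') μ (z + z' + μ + μ') (z + z' - μ + μ') (by ring) (by ring)
  have e4 := MQI' hτ (z + (μ - μ')) z' (z + z' + μ - μ') (z + μ - z' - μ') (by ring) (by ring)
  have e5 := MQI' hτ (z + z' + μ) μ' (z + z' + μ + μ') (z + z' + μ - μ') (by ring) (by ring)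
  have e6 := MQI' hτ z (z' + (μ' - μ)) (z + z' - μ + μ') (z + μ - z' - μ') (by ring) (by ring)
  rw [e1, e2, e3, e4, e5, e6]
  ring

end FayAux

open FayAux in
/-- Fay's trisecant identity / AYBE for the Kronecker function:
`φ(z,μ)·φ(z',μ') = φ(z+z',μ')·φ(z,μ−μ') + φ(z',μ'−μ)·φ(z+z',μ)` whenever none of the
arguments lies in the lattice `ℤ + τℤ`. -/
theorem kronecker_AYBE
    (τ : ℂ) (hτ : 0 < τ.im)
    (z z' μ μ' : ℂ)
    (hz : z ∉ lattice τ) (hz' : z' ∉ lattice τ) (hzz : z + z' ∉ lattice τ)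
    (hμ : μ ∉ lattice τ) (hμ' : μ' ∉ lattice τ)
    (hμμ' : μ - μ' ∉ lattice τ) (hμ'μ : μ' - μ ∉ lattice τ) :
    kronecker τ z μ * kronecker τ z' μ' =
      kronecker τ (z + z') μ' * kronecker τ z (μ - μ') +
        kronecker τ z' (μ' - μ) * kronecker τ (z + z') μ := by
  have h1 : jtheta τ z ≠ 0 := jtheta_ne_zero hτ hz
  have h2 : jtheta τ z' ≠ 0 := jtheta_ne_zero hτ hz'
  have h3 : jtheta τ (z + z') ≠ 0 := jtheta_ne_zero hτ hzz
  have h4 : jtheta τ μ ≠ 0 := jtheta_ne_zero hτ hμ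
  have h5 : jtheta τ μ' ≠ 0 := jtheta_ne_zero hτ hμ'
  have h6 : jtheta τ (μ - μ') ≠ 0 := jtheta_ne_zero hτ hμμ'
  have hodd : jtheta τ (μ' - μ) = -jtheta τ (μ - μ') := by
    rw [show μ' - μ = -(μ - μ') by ring, jtheta_neg]
  have h7 : jtheta τ (μ' - μ) ≠ 0 := jtheta_ne_zero hτ hμ'μ
  have key := theta3 hτ z z' μ μ'
  unfold kronecker
  rw [hodd]
  field_simp
  linear_combination (deriv (jtheta τ) 0)^2 * key

end
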